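/- arXiv:2209.12283 — 6 statements merged into one kernel-verified Lean document; each statement's English description precedes it below -/
import Mathlib

section
/- Let n ≥ 1, let P and Q be distinct points of the open unit ball Bⁿ = {x ∈ ℝⁿ : ‖x‖ < 1}, and let r ≥ 1 be a real number. Then ‖P/r − Q‖ = (r−1)/r holds if and only if d_F(P,Q) = ln r. -/
/-- The Funk distance on the open unit ball of Euclidean n-space:
`d_F(P,Q) = ln((√k − ⟨P, Q−P⟩)/(√k − ⟨Q, Q−P⟩))` with
`k = ⟨P, Q−P⟩² + (1 − ‖P‖²)‖Q−P‖²`. -/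
noncomputable def funkDist {n : ℕ} (P Q : EuclideanSpace ℝ (Fin n)) : ℝ :=
  Real.log
    ((Real.sqrt ((inner ℝ P (Q - P) : ℝ) ^ 2 + (1 - ‖P‖ ^ 2) * ‖Q - P‖ ^ 2) - (inner ℝ P (Q - P) : ℝ)) /
     (Real.sqrt ((inner ℝ P (Q - P) : ℝ) ^ 2 + (1 - ‖P‖ ^ 2) * ‖Q - P‖ ^ 2) - (inner ℝ Q (Q - P) : ℝ)))

/-- `ρ(ε,η) = (1 + sgn(ε−η)·ε)/(1 + sgn(ε−η)·η)`. -/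
noncomputable def rho (ε η : ℝ) : ℝ :=
  (1 + Real.sign (ε - η) * ε) / (1 + Real.sign (ε - η) * η)

/-- The point `(a,b)` of the Euclidean plane. -/
def pt (a b : ℝ) : EuclideanSpace ℝ (Fin 2) := WithLp.toLp 2 ![a, b]

private lemma aux_sq_eq {x y : ℝ} (hx : 0 ≤ x) (hy : 0 ≤ y) (h : x ^ 2 = y ^ 2) :
    x = y := by
  have habs : |x| = |y| := by
    rw [← Real.sqrt_sq_eq_abs, ← Real.sqrt_sq_eq_abs, h]
  rwa [abs_of_nonneg hx, abs_of_nonneg hy] at habs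

set_option maxHeartbeats 1000000 in
/-- For `n ≥ 1` and distinct points `P, Q` of the open unit ball of `ℝⁿ` and `r ≥ 1`,
`‖P/r − Q‖ = (r−1)/r` iff `d_F(P,Q) = ln r`. -/
theorem funk_parabola_stmt1 (n : ℕ) (hn : 1 ≤ n) (P Q : EuclideanSpace ℝ (Fin n))
    (hP : ‖P‖ < 1) (hQ : ‖Q‖ < 1) (hPQ : P ≠ Q) (r : ℝ) (hr : 1 ≤ r) :
    ‖(1 / r) • P - Q‖ = (r - 1) / r ↔ funkDist P Q = Real.log r := by
  have hr0 : (0:ℝ) < r := by linarith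
  have hp1 : ‖P‖ ^ 2 < 1 := by nlinarith [norm_nonneg P]
  have hq1 : ‖Q‖ ^ 2 < 1 := by nlinarith [norm_nonneg Q]
  have hvne : Q - P ≠ 0 := sub_ne_zero.mpr (Ne.symm hPQ)
  have hV : (0:ℝ) < ‖Q - P‖ ^ 2 := by
    have : (0:ℝ) < ‖Q - P‖ := norm_pos_iff.mpr hvne
    positivity
  set s : ℝ := inner ℝ P Q with hs
  have ha : (inner ℝ P (Q - P) : ℝ) = s - ‖P‖ ^ 2 := by
    rw [inner_sub_right, real_inner_self_eq_norm_sq]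
  have hb : (inner ℝ Q (Q - P) : ℝ) = ‖Q‖ ^ 2 - s := by
    rw [inner_sub_right, real_inner_self_eq_norm_sq, real_inner_comm P Q]
  have hVv : ‖Q - P‖ ^ 2 = ‖Q‖ ^ 2 - 2 * s + ‖P‖ ^ 2 := by
    rw [norm_sub_sq_real, real_inner_comm P Q]
  set k : ℝ := (s - ‖P‖ ^ 2) ^ 2 + (1 - ‖P‖ ^ 2) * ‖Q - P‖ ^ 2 with hk
  have hk0 : 0 < k := by
    have h1 : (0:ℝ) < (1 - ‖P‖ ^ 2) * ‖Q - P‖ ^ 2 :=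
      mul_pos (by linarith) hV
    nlinarith [sq_nonneg (s - ‖P‖ ^ 2)]
  set sk : ℝ := Real.sqrt k with hsk
  have hsk2 : sk ^ 2 = k := Real.sq_sqrt hk0.le
  have hsknn : 0 ≤ sk := Real.sqrt_nonneg k
  have hkq : k = (‖Q‖ ^ 2 - s) ^ 2 + (1 - ‖Q‖ ^ 2) * ‖Q - P‖ ^ 2 := by
    rw [hk, hVv]; ring
  have hska : s - ‖P‖ ^ 2 < sk := by
    nlinarith [mul_pos (show (0:ℝ) < 1 - ‖P‖ ^ 2 by linarith) hV]
  have hskb : ‖Q‖ ^ 2 - s < sk := by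
    nlinarith [mul_pos (show (0:ℝ) < 1 - ‖Q‖ ^ 2 by linarith) hV]
  have hfd : funkDist P Q =
      Real.log ((sk - (s - ‖P‖ ^ 2)) / (sk - (‖Q‖ ^ 2 - s))) := by
    simp only [funkDist, ha, hb, ← hk, ← hsk]
  -- squared norm of P - r • Q
  have hX : ‖P - r • Q‖ ^ 2 = ‖P‖ ^ 2 - 2 * r * s + r ^ 2 * ‖Q‖ ^ 2 := by
    rw [norm_sub_sq_real, real_inner_smul_right, norm_smul, Real.norm_eq_abs,
      mul_pow, sq_abs, ← hs]
    ring
  -- reduce left side to squared condition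
  have hnorm : ‖(1 / r) • P - Q‖ = (r - 1) / r ↔ ‖P - r • Q‖ ^ 2 = (r - 1) ^ 2 := by
    have h1 : (1 / r) • P - Q = (1 / r) • (P - r • Q) := by
      rw [smul_sub, smul_smul]
      rw [one_div, inv_mul_cancel₀ hr0.ne', one_smul]
    rw [h1, norm_smul, Real.norm_eq_abs, abs_of_pos (by positivity : (0:ℝ) < 1 / r)]
    constructor
    · intro h
      have h' : 1 / r * ‖P - r • Q‖ = 1 / r * (r - 1) := by
        rw [h]; ring
      have h2 : ‖P - r • Q‖ = r - 1 :=
        mul_left_cancel₀ (one_div_ne_zero hr0.ne') h'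
      rw [h2]
    · intro h
      have h2 : ‖P - r • Q‖ = r - 1 :=
        aux_sq_eq (norm_nonneg _) (by linarith) h
      rw [h2]; ring
  rw [hnorm, hfd]
  -- Cauchy–Schwarz fact
  have hinner : (inner ℝ (P - r • Q) Q : ℝ) = s - r * ‖Q‖ ^ 2 := by
    rw [inner_sub_left, real_inner_smul_left, real_inner_self_eq_norm_sq, ← hs]
  have hCS : -(‖P - r • Q‖ * ‖Q‖) ≤ s - r * ‖Q‖ ^ 2 := by
    rw [← hinner]
    have h1 := abs_real_inner_le_norm (P - r • Q) Q
    have h2 := neg_abs_le (inner ℝ (P - r • Q) Q : ℝ)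
    linarith
  constructor
  · intro hE
    have hXr : ‖P - r • Q‖ = r - 1 :=
      aux_sq_eq (norm_nonneg _) (by linarith) hE
    have hE2 : ‖P‖ ^ 2 - 2 * r * s + r ^ 2 * ‖Q‖ ^ 2 = (r - 1) ^ 2 := by
      rw [← hX]; exact hE
    have hcs2 : 0 ≤ s - r * ‖Q‖ ^ 2 + (r - 1) := by
      rw [hXr] at hCS
      nlinarith [mul_nonneg (show (0:ℝ) ≤ r - 1 by linarith)
        (show (0:ℝ) ≤ 1 - ‖Q‖ by linarith [norm_nonneg Q])]
    have hba : 0 ≤ r * (‖Q‖ ^ 2 - s) - (s - ‖P‖ ^ 2) := by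
      nlinarith [mul_nonneg (show (0:ℝ) ≤ r - 1 by linarith) hcs2]
    have hsq : (r * (‖Q‖ ^ 2 - s) - (s - ‖P‖ ^ 2)) ^ 2 = (r - 1) ^ 2 * k := by
      rw [hk, hVv]
      linear_combination (‖P‖ ^ 2 + ‖Q‖ ^ 2 - 2 * s) * hE2
    have heq : r * (‖Q‖ ^ 2 - s) - (s - ‖P‖ ^ 2) = (r - 1) * sk := by
      refine aux_sq_eq hba (mul_nonneg (by linarith) hsknn) ?_
      rw [mul_pow, hsk2, hsq]
    have hratio : (sk - (s - ‖P‖ ^ 2)) / (sk - (‖Q‖ ^ 2 - s)) = r := by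
      rw [div_eq_iff (by linarith : sk - (‖Q‖ ^ 2 - s) ≠ 0)]
      linarith
    rw [hratio]
  · intro hlog
    have hRpos : 0 < (sk - (s - ‖P‖ ^ 2)) / (sk - (‖Q‖ ^ 2 - s)) := by
      apply div_pos <;> linarith
    have hRr : (sk - (s - ‖P‖ ^ 2)) / (sk - (‖Q‖ ^ 2 - s)) = r := by
      rw [← Real.exp_log hRpos, hlog, Real.exp_log hr0]
    rw [div_eq_iff (by linarith : sk - (‖Q‖ ^ 2 - s) ≠ 0)] at hRr
    have heq : r * (‖Q‖ ^ 2 - s) - (s - ‖P‖ ^ 2) = (r - 1) * sk := by linarith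
    have hsq : (r * (‖Q‖ ^ 2 - s) - (s - ‖P‖ ^ 2)) ^ 2 = (r - 1) ^ 2 * k := by
      rw [heq, mul_pow, hsk2]
    have key : ‖Q - P‖ ^ 2 *
        (‖P‖ ^ 2 - 2 * r * s + r ^ 2 * ‖Q‖ ^ 2 - (r - 1) ^ 2) = 0 := by
      rw [hk] at hsq
      rw [hVv] at hsq ⊢
      linear_combination hsq
    have hT : ‖P‖ ^ 2 - 2 * r * s + r ^ 2 * ‖Q‖ ^ 2 - (r - 1) ^ 2 = 0 := by
      rcases mul_eq_zero.mp key with h | h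
      · exact absurd h (by linarith)
      · exact h
    rw [hX]; linarith
end

section
/- Let P = (a,b) ∈ B² and let c ∈ (−1,1) with b ≠ c, and let s be the horizontal line y = c. Then the point Q* = (a/ρ(b,c), c) lies in B², satisfies d_F(P, Q*) = ln ρ(b,c), and for every t ∈ ℝ with (t,c) ∈ B² one has d_F(P, (t,c)) ≥ ln ρ(b,c). In other words, the Funk distance from the point P to the line s is attained at Q* and equals ln ρ(b,c). -/
lemma pt_sub (a b x y : ℝ) : pt a b - pt x y = pt (a-x) (b-y) := by
  ext i; fin_cases i <;> simp [pt]
lemma inner_pt (a b x y : ℝ) : (inner ℝ (pt a b) (pt x y) : ℝ) = a*x + b*y := by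
  simp [pt, PiLp.inner_apply, Fin.sum_univ_two]; ring
lemma norm_pt_sq (a b : ℝ) : ‖pt a b‖^2 = a^2 + b^2 := by
  rw [EuclideanSpace.norm_eq]
  rw [Real.sq_sqrt (by positivity)]
  simp [pt, Fin.sum_univ_two]
lemma funk_scalar (a b t c : ℝ) :
    funkDist (pt a b) (pt t c) =
    Real.log
      ((Real.sqrt ((a*(t-a)+b*(c-b))^2 + (1-(a^2+b^2))*((t-a)^2+(c-b)^2)) - (a*(t-a)+b*(c-b))) /
       (Real.sqrt ((a*(t-a)+b*(c-b))^2 + (1-(a^2+b^2))*((t-a)^2+(c-b)^2)) - (t*(t-a)+c*(c-b)))) := by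
  unfold funkDist
  rw [pt_sub, inner_pt, inner_pt, norm_pt_sq, norm_pt_sq]

lemma core (a b c : ℝ) (h1 : a^2 + b^2 < 1) (hc1 : -1 < c) (hcb : c < b) :
    (a*(1+c)/(1+b))^2 + c^2 < 1 ∧
    funkDist (pt a b) (pt (a*(1+c)/(1+b)) c) = Real.log ((1+b)/(1+c)) ∧
    ∀ t : ℝ, t^2 + c^2 < 1 → Real.log ((1+b)/(1+c)) ≤ funkDist (pt a b) (pt t c) := by
  have hb1 : b < 1 := by nlinarith [sq_nonneg a]
  have hb0 : (0:ℝ) < 1 + b := by linarith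
  have hc0 : (0:ℝ) < 1 + c := by linarith
  have hm : (0:ℝ) < b - c := by linarith
  refine ⟨?_, ?_, ?_⟩
  · -- Q* in ball
    have h2 : (a*(1+c)/(1+b))^2 + c^2 = ((a*(1+c))^2 + c^2*(1+b)^2)/(1+b)^2 := by
      field_simp
    rw [h2, div_lt_one (by positivity)]
    have ha2 : a^2 < (1-b)*(1+b) := by nlinarith
    nlinarith [mul_lt_mul_of_pos_right ha2 (by positivity : (0:ℝ) < (1+c)^2),
      mul_nonneg (mul_nonneg hm.le hb0.le) hc0.le]
  · -- equality at Q*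
    rw [funk_scalar]
    set t0 : ℝ := a*(1+c)/(1+b) with ht0
    have hb0' : (1:ℝ) + b ≠ 0 := ne_of_gt hb0
    have hK : (a*(t0-a)+b*(c-b))^2 + (1-(a^2+b^2))*((t0-a)^2+(c-b)^2) = (b-c)^2 := by
      rw [ht0]; field_simp; ring
    rw [hK, Real.sqrt_sq hm.le]
    have hq : (a^2 + (1+b)^2) > 0 := by positivity
    have hN : b - c - (a*(t0-a)+b*(c-b)) = (b-c)*((1+b)^2+a^2)/(1+b) := by
      rw [ht0]; field_simp; ring
    have hD : b - c - (t0*(t0-a)+c*(c-b)) = (b-c)*((1+b)^2+a^2)*(1+c)/(1+b)^2 := by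
      rw [ht0]; field_simp; ring
    rw [hN, hD]
    congr 1
    have hq' : ((1+b)^2+a^2) ≠ 0 := by positivity
    field_simp
  · -- lower bound
    intro t ht
    rw [funk_scalar]
    have hcb' : c - b ≠ 0 := by intro h; linarith
    set U : ℝ := a*(t-a)+b*(c-b) with hU
    set V : ℝ := t*(t-a)+c*(c-b) with hV
    set S : ℝ := (t-a)^2+(c-b)^2 with hS
    set K : ℝ := U^2 + (1-(a^2+b^2))*S with hK
    have hSpos : 0 < S := by
      rw [hS]
      have h2 : (0:ℝ) < (c-b)^2 := by positivity
      nlinarith [sq_nonneg (t-a)]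
    have hKV : K - V^2 = S*(1-(t^2+c^2)) := by rw [hK, hV, hU, hS]; ring
    have hVK : V^2 < K := by nlinarith [mul_pos hSpos (by linarith : (0:ℝ) < 1-(t^2+c^2))]
    have hDpos : 0 < Real.sqrt K - V := by
      have h3 : V ≤ |V| := le_abs_self V
      have h4 : |V| < Real.sqrt K := by
        rw [← Real.sqrt_sq_eq_abs]
        exact Real.sqrt_lt_sqrt (sq_nonneg V) hVK
      linarith
    set W : ℝ := (b-c)*U + S*(1+b) with hW
    have hWpos : 0 < W := by
      rw [hW, hU, hS]
      nlinarith [sq_nonneg (2*(1+b)*(t-a)+a*(b-c)), mul_pos hm (mul_pos hm hb0),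
        mul_pos hm hm]
    have hWK : (b-c)^2 * K ≤ W^2 := by
      have hid : W^2 - (b-c)^2*K = S*((1+b)*(t-a)+a*(b-c))^2 := by
        rw [hW, hK, hU, hS]; ring
      have h6 : 0 ≤ S*((1+b)*(t-a)+a*(b-c))^2 := by positivity
      linarith
    have hsqK : (b-c) * Real.sqrt K ≤ W := by
      have h5 : (b-c) * Real.sqrt K = Real.sqrt ((b-c)^2 * K) := by
        rw [Real.sqrt_mul (sq_nonneg _), Real.sqrt_sq hm.le]
      rw [h5]
      calc Real.sqrt ((b-c)^2*K) ≤ Real.sqrt (W^2) := Real.sqrt_le_sqrt hWK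
        _ = W := Real.sqrt_sq hWpos.le
    have hVUS : V = U + S := by rw [hV, hU, hS]; ring
    have hratio : (1+b)/(1+c) ≤ (Real.sqrt K - U)/(Real.sqrt K - V) := by
      rw [div_le_div_iff₀ hc0 hDpos]
      have : (Real.sqrt K - U) * (1+c) - (1+b)*(Real.sqrt K - V)
          = W - (b-c)*Real.sqrt K := by rw [hVUS, hW]; ring
      linarith
    exact Real.log_le_log (by positivity) hratio

lemma funk_reflect (a b t c : ℝ) :
    funkDist (pt a (-b)) (pt t (-c)) = funkDist (pt a b) (pt t c) := by
  rw [funk_scalar, funk_scalar]; ring_nf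

lemma norm_pt_lt (a b : ℝ) : ‖pt a b‖ < 1 ↔ a^2 + b^2 < 1 := by
  rw [← norm_pt_sq a b]
  constructor
  · intro h; nlinarith [norm_nonneg (pt a b)]
  · intro h; nlinarith [norm_nonneg (pt a b), sq_nonneg (‖pt a b‖ - 1)]


/-- The Funk distance from a point `P = (a,b)` of the disk to the horizontal line `y = c`
is attained at `Q* = (a/ρ(b,c), c)` and equals `ln ρ(b,c)`. -/
theorem funk_parabola_stmt3 (a b c : ℝ) (hP : ‖pt a b‖ < 1)
    (hc : -1 < c ∧ c < 1) (hbc : b ≠ c) :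
    ‖pt (a / rho b c) c‖ < 1 ∧
    funkDist (pt a b) (pt (a / rho b c) c) = Real.log (rho b c) ∧
    ∀ t : ℝ, ‖pt t c‖ < 1 → Real.log (rho b c) ≤ funkDist (pt a b) (pt t c) := by
  rw [norm_pt_lt] at hP
  rcases lt_or_gt_of_ne hbc with hlt | hgt
  · -- b < c : reflect
    have hb1 : -1 < b := by nlinarith [sq_nonneg a]
    have hrho : rho b c = (1-b)/(1-c) := by
      unfold rho
      rw [Real.sign_of_neg (by linarith : b - c < 0)]
      ring_nf
    have hb0 : (0:ℝ) < 1 - b := by nlinarith [sq_nonneg a]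
    have hc0 : (0:ℝ) < 1 - c := by linarith [hc.2]
    have hdiv : a / rho b c = a*(1-c)/(1-b) := by
      rw [hrho, div_div_eq_mul_div]
    obtain ⟨k1, k2, k3⟩ := core a (-b) (-c)
      (by nlinarith) (by linarith [hc.2]) (by linarith)
    have e1 : a*(1+ -c)/(1+ -b) = a*(1-c)/(1-b) := by ring_nf
    have e2 : ((1:ℝ)+ -b)/(1+ -c) = (1-b)/(1-c) := by ring_nf
    rw [e1] at k1 k2
    rw [e2] at k2 k3
    refine ⟨?_, ?_, ?_⟩
    · rw [norm_pt_lt, hdiv]; nlinarith [k1]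
    · rw [hdiv, hrho, ← funk_reflect]
      exact k2
    · intro t ht
      rw [norm_pt_lt] at ht
      rw [hrho, ← funk_reflect]
      exact k3 t (by nlinarith)
  · -- c < b
    have hrho : rho b c = (1+b)/(1+c) := by
      unfold rho
      rw [Real.sign_of_pos (by linarith : 0 < b - c)]
      ring_nf
    have hb1 : b < 1 := by nlinarith [sq_nonneg a]
    have hb0 : (0:ℝ) < 1 + b := by linarith [hc.1]
    have hc0 : (0:ℝ) < 1 + c := by linarith [hc.1]
    have hdiv : a / rho b c = a*(1+c)/(1+b) := by
      rw [hrho, div_div_eq_mul_div]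
    obtain ⟨k1, k2, k3⟩ := core a b c hP hc.1 hgt
    refine ⟨?_, ?_, ?_⟩
    · rw [norm_pt_lt, hdiv]; exact k1
    · rw [hdiv, hrho]; exact k2
    · intro t ht
      rw [norm_pt_lt] at ht
      rw [hrho]
      exact k3 t ht
end

section
/- Let y₀ ∈ (−1,1) and F = (f₀,g₀) ∈ B² with g₀ ≠ y₀, and set σ₁ = 1 + sgn(y₀−g₀)·y₀, B = −2f₀/σ₁, C = (f₀² + (y₀−g₀)² + 2|y₀−g₀|)/σ₁². Then the discriminant of the type-1 Funk parabola equation satisfies B² − 4C = −(4/σ₁²)·((y₀−g₀)² + 2|y₀−g₀|) < 0, so the equation x² + B·x·ȳ + C·ȳ² + E·ȳ = 0 is of elliptic type in Euclidean geometry. -/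
/-- The discriminant of the type-1 Funk parabola equation:
`B² − 4C = −(4/σ₁²)·((y₀−g₀)² + 2|y₀−g₀|) < 0`, so the equation is of elliptic type. -/
theorem funk_parabola_stmt8 (y₀ f₀ g₀ σ₁ B C : ℝ)
    (hy₀ : -1 < y₀ ∧ y₀ < 1) (hF : ‖pt f₀ g₀‖ < 1) (hgy : g₀ ≠ y₀)
    (hσ : σ₁ = 1 + Real.sign (y₀ - g₀) * y₀)
    (hB : B = -2 * f₀ / σ₁)
    (hC : C = (f₀ ^ 2 + (y₀ - g₀) ^ 2 + 2 * |y₀ - g₀|) / σ₁ ^ 2) :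
    B ^ 2 - 4 * C = -(4 / σ₁ ^ 2) * ((y₀ - g₀) ^ 2 + 2 * |y₀ - g₀|) ∧
    B ^ 2 - 4 * C < 0 := by
  obtain ⟨h1, h2⟩ := hy₀
  have hσpos : 0 < σ₁ := by
    rcases lt_or_gt_of_ne (sub_ne_zero.mpr (Ne.symm hgy)) with h | h
    · rw [hσ, Real.sign_of_neg h]; linarith
    · rw [hσ, Real.sign_of_pos h]; linarith
  have hσ2 : (0:ℝ) < σ₁ ^ 2 := by positivity
  have heq : B ^ 2 - 4 * C = -(4 / σ₁ ^ 2) * ((y₀ - g₀) ^ 2 + 2 * |y₀ - g₀|) := by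
    rw [hB, hC]; field_simp; ring
  refine ⟨heq, ?_⟩
  rw [heq]
  have habs : 0 < |y₀ - g₀| := abs_pos.mpr (sub_ne_zero.mpr (Ne.symm hgy))
  have : 0 < (y₀ - g₀) ^ 2 + 2 * |y₀ - g₀| := by positivity
  have h4 : 0 < 4 / σ₁ ^ 2 := by positivity
  nlinarith
end

section
/- Canonical form of the type-1 Funk parabola with f₀ = 0: let y₀ ∈ (−1,1) and F = (0,g₀) ∈ B² with g₀ ≠ y₀, put s₁ = sgn(y₀−g₀), σ₁ = 1 + s₁·y₀, C = ((y₀−g₀)² + 2|y₀−g₀|)/σ₁², E = −2|y₀−g₀|/σ₁, and for (x,y) ∈ ℝ² set ȳ = 1 + s₁·y. Then x² + C·ȳ² + E·ȳ = 0 holds if and only if x²/(E²/(4C)) + (ȳ + E/(2C))²/(E²/(4C²)) = 1; in particular the solution set is a Euclidean ellipse with center (0, (g₀ − s₁)/(2 + |y₀−g₀|)). -/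
lemma funk_aux (C E x u : ℝ) (hC : 0 < C) (hE : E ≠ 0) :
    x^2 + C*u^2 + E*u = 0 ↔ x^2/(E^2/(4*C)) + (u + E/(2*C))^2/(E^2/(4*C^2)) = 1 := by
  have key : x^2/(E^2/(4*C)) + (u + E/(2*C))^2/(E^2/(4*C^2)) - 1
      = (4*C/E^2) * (x^2 + C*u^2 + E*u) := by
    have hC' := hC.ne'
    field_simp
    ring
  constructor
  · intro h
    have h2 := key
    rw [h, mul_zero] at h2
    linarith
  · intro h
    have h2 : (4*C/E^2) * (x^2 + C*u^2 + E*u) = 0 := by rw [← key]; linarith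
    rcases mul_eq_zero.mp h2 with h3 | h3
    · exact absurd h3 (div_ne_zero (by linarith) (pow_ne_zero 2 hE))
    · exact h3

/-- Canonical form of the type-1 Funk parabola with `f₀ = 0`:
`x² + Cȳ² + Eȳ = 0` iff `x²/(E²/(4C)) + (ȳ + E/(2C))²/(E²/(4C²)) = 1`,
an ellipse whose center has `y`-coordinate `(g₀ − s₁)/(2 + |y₀−g₀|)` (and `x`-coordinate 0). -/
theorem funk_parabola_stmt9 (y₀ g₀ s₁ σ₁ C E : ℝ)
    (hy₀ : -1 < y₀ ∧ y₀ < 1) (hF : ‖pt (0 : ℝ) g₀‖ < 1) (hgy : g₀ ≠ y₀)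
    (hs : s₁ = Real.sign (y₀ - g₀)) (hσ : σ₁ = 1 + s₁ * y₀)
    (hC : C = ((y₀ - g₀) ^ 2 + 2 * |y₀ - g₀|) / σ₁ ^ 2)
    (hE : E = -2 * |y₀ - g₀| / σ₁) :
    (∀ x y : ℝ, x ^ 2 + C * (1 + s₁ * y) ^ 2 + E * (1 + s₁ * y) = 0 ↔
        x ^ 2 / (E ^ 2 / (4 * C)) +
          ((1 + s₁ * y) + E / (2 * C)) ^ 2 / (E ^ 2 / (4 * C ^ 2)) = 1) ∧
    s₁ * (-(E / (2 * C)) - 1) = (g₀ - s₁) / (2 + |y₀ - g₀|) := by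
  obtain ⟨hy1, hy2⟩ := hy₀
  have hd : y₀ - g₀ ≠ 0 := sub_ne_zero.mpr (Ne.symm hgy)
  have hcase : s₁ = 1 ∧ |y₀ - g₀| = y₀ - g₀ ∨ s₁ = -1 ∧ |y₀ - g₀| = -(y₀ - g₀) := by
    rcases hd.lt_or_gt with h | h
    · exact Or.inr ⟨by rw [hs, Real.sign_of_neg h], abs_of_neg h⟩
    · exact Or.inl ⟨by rw [hs, Real.sign_of_pos h], abs_of_pos h⟩
  have habs : |y₀ - g₀| = s₁ * (y₀ - g₀) := by
    rcases hcase with ⟨h1, h2⟩ | ⟨h1, h2⟩ <;> rw [h1, h2] <;> ring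
  have hs2 : s₁ ^ 2 = 1 := by
    rcases hcase with ⟨h1, _⟩ | ⟨h1, _⟩ <;> rw [h1] <;> norm_num
  have habspos : 0 < |y₀ - g₀| := abs_pos.mpr hd
  have hσpos : 0 < σ₁ := by
    rcases hcase with ⟨h1, _⟩ | ⟨h1, _⟩ <;> rw [hσ, h1] <;> linarith
  have hCpos : 0 < C := by
    rw [hC]
    apply div_pos (by nlinarith) (by positivity)
  have hEneg : E < 0 := by
    rw [hE]
    apply div_neg_of_neg_of_pos (by linarith) hσpos
  have hE0 : E ≠ 0 := hEneg.ne
  constructor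
  · intro x y
    exact funk_aux C E x (1 + s₁ * y) hCpos hE0
  · have hkey : E / (2 * C) = -σ₁ / (|y₀ - g₀| + 2) := by
      rw [hE, hC]
      rw [div_eq_div_iff (by positivity) (by positivity)]
      have hsq : |y₀ - g₀| ^ 2 = (y₀ - g₀) ^ 2 := sq_abs _
      field_simp
      nlinarith [hσpos.ne', habspos]
    rw [hkey]
    field_simp
    linear_combination (2 + |y₀ - g₀|) * s₁ * hσ - (2 + |y₀ - g₀|) * s₁ * habs + (2 + |y₀ - g₀|) * g₀ * hs2
end

section
/- Let y₀ ∈ (−1,1) and F = (f₀,g₀) ∈ B² with g₀ ≠ y₀, and set σ₂ = 1 − sgn(y₀−g₀)·y₀, B = −2f₀/σ₂, C = (f₀² + (y₀−g₀)² − 2|y₀−g₀|)/σ₂². Then the discriminant of the type-2 Funk parabola equation satisfies B² − 4C = (4/σ₂²)·|y₀−g₀|·(2 − |y₀−g₀|) > 0, so the equation x² + B·x·ȳ + C·ȳ² + E·ȳ = 0 is of hyperbolic type in Euclidean geometry. -/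
/-- The discriminant of the type-2 Funk parabola equation:
`B² − 4C = (4/σ₂²)·|y₀−g₀|·(2 − |y₀−g₀|) > 0`, so the equation is of hyperbolic type. -/
theorem funk_parabola_stmt11 (y₀ f₀ g₀ σ₂ B C : ℝ)
    (hy₀ : -1 < y₀ ∧ y₀ < 1) (hF : ‖pt f₀ g₀‖ < 1) (hgy : g₀ ≠ y₀)
    (hσ : σ₂ = 1 - Real.sign (y₀ - g₀) * y₀)
    (hB : B = -2 * f₀ / σ₂)
    (hC : C = (f₀ ^ 2 + (y₀ - g₀) ^ 2 - 2 * |y₀ - g₀|) / σ₂ ^ 2) :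
    B ^ 2 - 4 * C = (4 / σ₂ ^ 2) * |y₀ - g₀| * (2 - |y₀ - g₀|) ∧
    0 < B ^ 2 - 4 * C := by
  obtain ⟨hy1, hy2⟩ := hy₀
  have hd : y₀ - g₀ ≠ 0 := sub_ne_zero.mpr (Ne.symm hgy)
  -- σ₂ > 0
  have hσpos : 0 < σ₂ := by
    rcases lt_or_gt_of_ne hd with h | h
    · rw [hσ, Real.sign_of_neg h]; linarith
    · rw [hσ, Real.sign_of_pos h]; linarith
  have hσne : σ₂ ≠ 0 := ne_of_gt hσpos
  -- |g₀| < 1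
  have hg : |g₀| < 1 := by
    have hnorm : ‖pt f₀ g₀‖ ^ 2 = f₀ ^ 2 + g₀ ^ 2 := by
      rw [EuclideanSpace.norm_eq]
      rw [Real.sq_sqrt (by positivity)]
      simp [pt, Fin.sum_univ_two, sq_abs]
    have h1 : ‖pt f₀ g₀‖ ^ 2 < 1 := by
      have := norm_nonneg (pt f₀ g₀)
      nlinarith
    have : g₀ ^ 2 < 1 := by nlinarith [sq_nonneg f₀]
    nlinarith [abs_nonneg g₀, sq_abs g₀]
  -- main identity
  have heq : B ^ 2 - 4 * C = (4 / σ₂ ^ 2) * |y₀ - g₀| * (2 - |y₀ - g₀|) := by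
    rw [hB, hC]
    field_simp
    ring_nf
    nlinarith [sq_abs (y₀ - g₀), sq_nonneg σ₂]
  refine ⟨heq, ?_⟩
  rw [heq]
  have habs : 0 < |y₀ - g₀| := abs_pos.mpr hd
  have h2 : |y₀ - g₀| < 2 := by
    have := abs_sub_abs_le_abs_sub y₀ g₀
    have := abs_sub y₀ g₀
    have hy : |y₀| < 1 := abs_lt.mpr ⟨hy1, hy2⟩
    calc |y₀ - g₀| ≤ |y₀| + |g₀| := abs_sub y₀ g₀
    _ < 2 := by linarith
  have h4 : 0 < 4 / σ₂ ^ 2 := by positivity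
  exact mul_pos (mul_pos h4 habs) (by linarith)
end

section
/- Funk parabola of type 1 through the origin: let y₀ ∈ (−1,1) and F = (f₀,g₀) ∈ B² with g₀ ≠ y₀ and F ≠ (0,0). Then the origin belongs to the Funk parabola of type 1, i.e. d_F(F,(0,0)) = ln ρ(y₀,0), if and only if f₀² + g₀² = y₀²; that is, if and only if the Euclidean distances from F and from the line s: y = y₀ to the origin coincide. -/
/-- The origin lies on the type-1 Funk parabola with focus `F = (f₀,g₀)` and directrix
`y = y₀` iff `f₀² + g₀² = y₀²`, i.e. iff the Euclidean distances from `F` and from the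
directrix to the origin coincide. -/
theorem funk_parabola_stmt13 (y₀ f₀ g₀ : ℝ)
    (hy₀ : -1 < y₀ ∧ y₀ < 1) (hF : ‖pt f₀ g₀‖ < 1) (hgy : g₀ ≠ y₀)
    (hFne : pt f₀ g₀ ≠ pt 0 0) :
    funkDist (pt f₀ g₀) (pt 0 0) = Real.log (rho y₀ 0) ↔ f₀ ^ 2 + g₀ ^ 2 = y₀ ^ 2 := by
  have h00 : pt 0 0 = 0 := by
    ext i; fin_cases i <;> simp [pt]
  set r : ℝ := ‖pt f₀ g₀‖ with hrdef
  have hr : 0 < r := by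
    rw [hrdef, norm_pos_iff]
    simpa [h00] using hFne
  have hr2 : r ^ 2 = f₀ ^ 2 + g₀ ^ 2 := by
    rw [hrdef, EuclideanSpace.norm_eq]
    rw [Real.sq_sqrt (by positivity)]
    simp [pt, Fin.sum_univ_two, sq_abs, sq]
  have hin : (inner ℝ (pt f₀ g₀) (pt 0 0 - pt f₀ g₀) : ℝ) = -(r ^ 2) := by
    rw [h00, zero_sub, inner_neg_right, real_inner_self_eq_norm_sq]
  have hinQ : (inner ℝ (pt 0 0) (pt 0 0 - pt f₀ g₀) : ℝ) = 0 := by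
    rw [h00, inner_zero_left]
  have hnorm : ‖pt 0 0 - pt f₀ g₀‖ = r := by
    rw [h00, zero_sub, norm_neg]
  have hlhs : funkDist (pt f₀ g₀) (pt 0 0) = Real.log (1 + r) := by
    unfold funkDist
    rw [hin, hinQ, hnorm]
    have hk : (-(r ^ 2)) ^ 2 + (1 - r ^ 2) * r ^ 2 = r ^ 2 := by ring
    rw [hk, Real.sqrt_sq hr.le, sub_zero, sub_neg_eq_add]
    congr 1
    field_simp
  have hrhs : rho y₀ 0 = 1 + |y₀| := by
    unfold rho
    rcases lt_trichotomy y₀ 0 with h | h | h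
    · rw [abs_of_neg h]
      simp only [sub_zero, Real.sign_of_neg h, mul_zero, add_zero, div_one]
      ring
    · simp [h]
    · rw [abs_of_pos h]
      simp only [sub_zero, Real.sign_of_pos h, mul_zero, add_zero, div_one, one_mul]
  rw [hlhs, hrhs, ← hr2]
  constructor
  · intro h
    have h2 := congrArg Real.exp h
    rw [Real.exp_log (by positivity), Real.exp_log (by positivity)] at h2
    have : r = |y₀| := by linarith
    rw [this, sq_abs]
  · intro h
    have hy : r = |y₀| := by nlinarith [abs_nonneg y₀, sq_abs y₀]
    rw [hy]
end
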